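/- For the 9-dimensional quiver algebra A with relations δ² = γ³ = αβ, δγ = γδ = 0, δα = γα = 0, βδ = βγ = 0, the socle of A (as a two-sided A-module) has k-basis {αβ, βα}. -/

import Mathlib

/-! The 9-dimensional algebra `A` given by the quiver with vertices `i, j`, arrows
`α : i → j`, `β : j → i`, and loops `γ, δ` at `i`, with relations
`δ² = γ³ = αβ`, `δγ = γδ = 0`, `δα = γα = 0`, `βδ = βγ = 0`.
Paths compose left-to-right, so the product `x * y` means "first `x`, then `y`";
in particular `α * β` is a loop at `i` and `β * α` is a loop at `j`.
We realise `A` as the quotient of the free algebra on the six generators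
`e_i, e_j, α, β, γ, δ` by the path-algebra relations together with the quiver relations. -/

open FreeAlgebra

/-- The defining relations of the quiver algebra: generator `0` is the vertex idempotent
`e_i`, `1` is `e_j`, `2` is `α : i → j`, `3` is `β : j → i`, `4` is the loop `γ` at `i`,
and `5` is the loop `δ` at `i`. -/
inductive QuiverRel (k : Type*) [Field k] :
    FreeAlgebra k (Fin 6) → FreeAlgebra k (Fin 6) → Prop
  | idem_i : QuiverRel k (ι k 0 * ι k 0) (ι k 0)
  | idem_j : QuiverRel k (ι k 1 * ι k 1) (ι k 1)
  | orth_ij : QuiverRel k (ι k 0 * ι k 1) 0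
  | orth_ji : QuiverRel k (ι k 1 * ι k 0) 0
  | sum_idem : QuiverRel k (ι k 0 + ι k 1) 1
  | alpha_src : QuiverRel k (ι k 0 * ι k 2) (ι k 2)   -- α starts at i
  | alpha_tgt : QuiverRel k (ι k 2 * ι k 1) (ι k 2)   -- α ends at j
  | beta_src : QuiverRel k (ι k 1 * ι k 3) (ι k 3)    -- β starts at j
  | beta_tgt : QuiverRel k (ι k 3 * ι k 0) (ι k 3)    -- β ends at i
  | gamma_src : QuiverRel k (ι k 0 * ι k 4) (ι k 4)
  | gamma_tgt : QuiverRel k (ι k 4 * ι k 0) (ι k 4)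
  | delta_src : QuiverRel k (ι k 0 * ι k 5) (ι k 5)
  | delta_tgt : QuiverRel k (ι k 5 * ι k 0) (ι k 5)
  | delta_sq : QuiverRel k (ι k 5 * ι k 5) (ι k 2 * ι k 3)        -- δ² = αβ
  | gamma_cube : QuiverRel k (ι k 4 * (ι k 4 * ι k 4)) (ι k 2 * ι k 3)  -- γ³ = αβ
  | delta_gamma : QuiverRel k (ι k 5 * ι k 4) 0
  | gamma_delta : QuiverRel k (ι k 4 * ι k 5) 0
  | delta_alpha : QuiverRel k (ι k 5 * ι k 2) 0
  | gamma_alpha : QuiverRel k (ι k 4 * ι k 2) 0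
  | beta_delta : QuiverRel k (ι k 3 * ι k 5) 0
  | beta_gamma : QuiverRel k (ι k 3 * ι k 4) 0

variable (k : Type*) [Field k]

/-- The 9-dimensional quiver algebra `A`. -/
abbrev QuiverAlg := RingQuot (QuiverRel k)

/-- The vertex idempotent `i`. -/
noncomputable def qi : QuiverAlg k := RingQuot.mkAlgHom k (QuiverRel k) (ι k 0)
/-- The vertex idempotent `j`. -/
noncomputable def qj : QuiverAlg k := RingQuot.mkAlgHom k (QuiverRel k) (ι k 1)
/-- The arrow `α : i → j`. -/
noncomputable def qα : QuiverAlg k := RingQuot.mkAlgHom k (QuiverRel k) (ι k 2)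
/-- The arrow `β : j → i`. -/
noncomputable def qβ : QuiverAlg k := RingQuot.mkAlgHom k (QuiverRel k) (ι k 3)
/-- The loop `γ` at `i`. -/
noncomputable def qγ : QuiverAlg k := RingQuot.mkAlgHom k (QuiverRel k) (ι k 4)
/-- The loop `δ` at `i`. -/
noncomputable def qδ : QuiverAlg k := RingQuot.mkAlgHom k (QuiverRel k) (ι k 5)

/-- The standard basis vector `{i, j, α, β, βα, γ, γ², δ, δ²}` of `A`. -/
noncomputable def qbasisVec : Fin 9 → QuiverAlg k :=
  ![qi k, qj k, qα k, qβ k, qβ k * qα k, qγ k, qγ k ^ 2, qδ k, qδ k ^ 2]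

/-- The (left) socle of `A`: the annihilator `{a | J(A)·a = 0}` of the Jacobson radical,
as a `k`-submodule of `A`. -/
noncomputable def qsoc : Submodule k (QuiverAlg k) where
  carrier := {a | ∀ x ∈ (⊥ : Ideal (QuiverAlg k)).jacobson, x * a = 0}
  add_mem' := by
    intro a b ha hb x hx
    rw [mul_add, ha x hx, hb x hx, add_zero]
  zero_mem' := by
    intro x hx
    rw [mul_zero]
  smul_mem' := by
    intro c a ha x hx
    rw [mul_smul_comm, ha x hx, smul_zero]

namespace QSoc

/-- relations -/
lemma rii : qi k * qi k = qi k := by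
  simpa only [map_mul, qi] using RingQuot.mkAlgHom_rel k QuiverRel.idem_i
lemma rjj : qj k * qj k = qj k := by
  simpa only [map_mul, qj] using RingQuot.mkAlgHom_rel k QuiverRel.idem_j
lemma rij : qi k * qj k = 0 := by
  simpa only [map_mul, map_zero, qi, qj] using RingQuot.mkAlgHom_rel k QuiverRel.orth_ij
lemma rji : qj k * qi k = 0 := by
  simpa only [map_mul, map_zero, qi, qj] using RingQuot.mkAlgHom_rel k QuiverRel.orth_ji
lemma rsum : qi k + qj k = 1 := by
  have h := RingQuot.mkAlgHom_rel k (QuiverRel.sum_idem (k := k))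
  rw [map_add, map_one] at h
  exact h
lemma ria : qi k * qα k = qα k := by
  simpa only [map_mul, qi, qα] using RingQuot.mkAlgHom_rel k QuiverRel.alpha_src
lemma raj : qα k * qj k = qα k := by
  simpa only [map_mul, qj, qα] using RingQuot.mkAlgHom_rel k QuiverRel.alpha_tgt
lemma rjb : qj k * qβ k = qβ k := by
  simpa only [map_mul, qj, qβ] using RingQuot.mkAlgHom_rel k QuiverRel.beta_src
lemma rbi : qβ k * qi k = qβ k := by
  simpa only [map_mul, qi, qβ] using RingQuot.mkAlgHom_rel k QuiverRel.beta_tgt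
lemma ric : qi k * qγ k = qγ k := by
  simpa only [map_mul, qi, qγ] using RingQuot.mkAlgHom_rel k QuiverRel.gamma_src
lemma rci : qγ k * qi k = qγ k := by
  simpa only [map_mul, qi, qγ] using RingQuot.mkAlgHom_rel k QuiverRel.gamma_tgt
lemma rid : qi k * qδ k = qδ k := by
  simpa only [map_mul, qi, qδ] using RingQuot.mkAlgHom_rel k QuiverRel.delta_src
lemma rdi : qδ k * qi k = qδ k := by
  simpa only [map_mul, qi, qδ] using RingQuot.mkAlgHom_rel k QuiverRel.delta_tgt
lemma rdd : qδ k * qδ k = qα k * qβ k := by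
  simpa only [map_mul, qδ, qα, qβ] using RingQuot.mkAlgHom_rel k QuiverRel.delta_sq
lemma rccc : qγ k * (qγ k * qγ k) = qα k * qβ k := by
  simpa only [map_mul, qγ, qα, qβ] using RingQuot.mkAlgHom_rel k QuiverRel.gamma_cube
lemma rdc : qδ k * qγ k = 0 := by
  simpa only [map_mul, map_zero, qδ, qγ] using RingQuot.mkAlgHom_rel k QuiverRel.delta_gamma
lemma rcd : qγ k * qδ k = 0 := by
  simpa only [map_mul, map_zero, qδ, qγ] using RingQuot.mkAlgHom_rel k QuiverRel.gamma_delta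
lemma rda : qδ k * qα k = 0 := by
  simpa only [map_mul, map_zero, qδ, qα] using RingQuot.mkAlgHom_rel k QuiverRel.delta_alpha
lemma rca : qγ k * qα k = 0 := by
  simpa only [map_mul, map_zero, qγ, qα] using RingQuot.mkAlgHom_rel k QuiverRel.gamma_alpha
lemma rbd : qβ k * qδ k = 0 := by
  simpa only [map_mul, map_zero, qβ, qδ] using RingQuot.mkAlgHom_rel k QuiverRel.beta_delta
lemma rbc : qβ k * qγ k = 0 := by
  simpa only [map_mul, map_zero, qβ, qγ] using RingQuot.mkAlgHom_rel k QuiverRel.beta_gamma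

variable {k}
lemma mid0 {x m y : QuiverAlg k} (h1 : x * m = x) (h2 : m * y = 0) : x * y = 0 := by
  rw [← h1, mul_assoc, h2, mul_zero]
lemma mid0' {x m y : QuiverAlg k} (h1 : m * y = y) (h2 : x * m = 0) : x * y = 0 := by
  rw [← h1, ← mul_assoc, h2, zero_mul]
variable (k)

lemma rai : qα k * qi k = 0 := mid0 (raj k) (rji k)
lemma rja : qj k * qα k = 0 := mid0' (ria k) (rji k)
lemma rib : qi k * qβ k = 0 := mid0' (rjb k) (rij k)
lemma rbj : qβ k * qj k = 0 := mid0 (rbi k) (rij k)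
lemma rjc : qj k * qγ k = 0 := mid0' (ric k) (rji k)
lemma rcj : qγ k * qj k = 0 := mid0 (rci k) (rij k)
lemma rjd : qj k * qδ k = 0 := mid0' (rid k) (rji k)
lemma rdj : qδ k * qj k = 0 := mid0 (rdi k) (rij k)
lemma raa : qα k * qα k = 0 := mid0 (raj k) (rja k)
lemma rac : qα k * qγ k = 0 := mid0 (raj k) (rjc k)
lemma rad : qα k * qδ k = 0 := mid0 (raj k) (rjd k)
lemma rbb : qβ k * qβ k = 0 := mid0 (rbi k) (rib k)
lemma rcb : qγ k * qβ k = 0 := mid0 (rci k) (rib k)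
lemma rdb : qδ k * qβ k = 0 := mid0 (rdi k) (rib k)

variable {k}
lemma tl {x y z : QuiverAlg k} (h : x * y = z) (w : QuiverAlg k) :
    x * (y * w) = z * w := by rw [← mul_assoc, h]
variable (k)

lemma tii (w) : qi k * (qi k * w) = qi k * w := tl (rii k) w
lemma tjj (w) : qj k * (qj k * w) = qj k * w := tl (rjj k) w
lemma tia (w) : qi k * (qα k * w) = qα k * w := tl (ria k) w
lemma taj (w) : qα k * (qj k * w) = qα k * w := tl (raj k) w
lemma tjb (w) : qj k * (qβ k * w) = qβ k * w := tl (rjb k) w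
lemma tbi (w) : qβ k * (qi k * w) = qβ k * w := tl (rbi k) w
lemma tic (w) : qi k * (qγ k * w) = qγ k * w := tl (ric k) w
lemma tci (w) : qγ k * (qi k * w) = qγ k * w := tl (rci k) w
lemma tid (w) : qi k * (qδ k * w) = qδ k * w := tl (rid k) w
lemma tdi (w) : qδ k * (qi k * w) = qδ k * w := tl (rdi k) w
lemma tij (w) : qi k * (qj k * w) = 0 := by rw [tl (rij k) w, zero_mul]
lemma tji (w) : qj k * (qi k * w) = 0 := by rw [tl (rji k) w, zero_mul]
lemma tai (w) : qα k * (qi k * w) = 0 := by rw [tl (rai k) w, zero_mul]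
lemma tja (w) : qj k * (qα k * w) = 0 := by rw [tl (rja k) w, zero_mul]
lemma tib (w) : qi k * (qβ k * w) = 0 := by rw [tl (rib k) w, zero_mul]
lemma tbj (w) : qβ k * (qj k * w) = 0 := by rw [tl (rbj k) w, zero_mul]
lemma tjc (w) : qj k * (qγ k * w) = 0 := by rw [tl (rjc k) w, zero_mul]
lemma tcj (w) : qγ k * (qj k * w) = 0 := by rw [tl (rcj k) w, zero_mul]
lemma tjd (w) : qj k * (qδ k * w) = 0 := by rw [tl (rjd k) w, zero_mul]
lemma tdj (w) : qδ k * (qj k * w) = 0 := by rw [tl (rdj k) w, zero_mul]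
lemma taa (w) : qα k * (qα k * w) = 0 := by rw [tl (raa k) w, zero_mul]
lemma tac (w) : qα k * (qγ k * w) = 0 := by rw [tl (rac k) w, zero_mul]
lemma tad (w) : qα k * (qδ k * w) = 0 := by rw [tl (rad k) w, zero_mul]
lemma tbb (w) : qβ k * (qβ k * w) = 0 := by rw [tl (rbb k) w, zero_mul]
lemma tcb (w) : qγ k * (qβ k * w) = 0 := by rw [tl (rcb k) w, zero_mul]
lemma tdb (w) : qδ k * (qβ k * w) = 0 := by rw [tl (rdb k) w, zero_mul]
lemma tbc (w) : qβ k * (qγ k * w) = 0 := by rw [tl (rbc k) w, zero_mul]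
lemma tbd (w) : qβ k * (qδ k * w) = 0 := by rw [tl (rbd k) w, zero_mul]
lemma tca (w) : qγ k * (qα k * w) = 0 := by rw [tl (rca k) w, zero_mul]
lemma tcd (w) : qγ k * (qδ k * w) = 0 := by rw [tl (rcd k) w, zero_mul]
lemma tda (w) : qδ k * (qα k * w) = 0 := by rw [tl (rda k) w, zero_mul]
lemma tdc (w) : qδ k * (qγ k * w) = 0 := by rw [tl (rdc k) w, zero_mul]

lemma tdd (w) : qδ k * (qδ k * w) = qα k * (qβ k * w) := by rw [tl (rdd k) w, mul_assoc]
lemma rccc' (w) : qγ k * (qγ k * (qγ k * w)) = qα k * (qβ k * w) := by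
  rw [← mul_assoc, ← mul_assoc, mul_assoc (qγ k) (qγ k) (qγ k), rccc, mul_assoc]
lemma raba : qα k * (qβ k * qα k) = 0 := by
  rw [← mul_assoc, ← rdd, mul_assoc, rda, mul_zero]
lemma raba' (w) : qα k * (qβ k * (qα k * w)) = 0 := by
  rw [← mul_assoc, ← rdd, mul_assoc, tda, mul_zero]
lemma rbab : qβ k * (qα k * qβ k) = 0 := by
  rw [← rdd, tl (rbd k), zero_mul]
lemma rbab' (w) : qβ k * (qα k * (qβ k * w)) = 0 := by
  rw [← mul_assoc (qα k), ← rdd, mul_assoc, ← mul_assoc, rbd, zero_mul]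



def tblN : ℕ → ℕ → Option (Fin 9)
  | 0, 0 => some 0
  | 0, 2 => some 2
  | 0, 5 => some 5
  | 0, 6 => some 6
  | 0, 7 => some 7
  | 0, 8 => some 8
  | 1, 1 => some 1
  | 1, 3 => some 3
  | 1, 4 => some 4
  | 2, 1 => some 2
  | 2, 3 => some 8
  | 3, 0 => some 3
  | 3, 2 => some 4
  | 4, 1 => some 4
  | 5, 0 => some 5
  | 5, 5 => some 6
  | 5, 6 => some 8
  | 6, 0 => some 6
  | 6, 5 => some 8
  | 7, 0 => some 7
  | 7, 7 => some 8
  | 8, 0 => some 8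
  | _, _ => none

lemma qb0 : qbasisVec k 0 = qi k := rfl
lemma qb1 : qbasisVec k 1 = qj k := rfl
lemma qb2 : qbasisVec k 2 = qα k := rfl
lemma qb3 : qbasisVec k 3 = qβ k := rfl
lemma qb4 : qbasisVec k 4 = qβ k * qα k := rfl
lemma qb5 : qbasisVec k 5 = qγ k := rfl
lemma qb6 : qbasisVec k 6 = qγ k ^ 2 := rfl
lemma qb7 : qbasisVec k 7 = qδ k := rfl
lemma qb8 : qbasisVec k 8 = qδ k ^ 2 := rfl

def tbl (p q : Fin 9) : Option (Fin 9) := tblN p.val q.val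

set_option maxHeartbeats 2000000 in
lemma basis_mul (p q : Fin 9) :
    qbasisVec k p * qbasisVec k q = (tbl p q).elim 0 (qbasisVec k) := by
  fin_cases p <;> fin_cases q <;>
    simp [tbl, tblN, qb0, qb1, qb2, qb3, qb4, qb5, qb6, qb7, qb8, pow_two, mul_assoc,
      rii, rjj, ria, raj, rjb, rbi, ric, rci, rid, rdi,
      rij, rji, rai, rja, rib, rbj, rjc, rcj, rjd, rdj,
      raa, rac, rad, rbb, rcb, rdb, rbc, rbd, rca, rcd, rda, rdc,
      rdd, rccc, tdd, rccc', raba, raba', rbab, rbab',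
      tii, tjj, tia, taj, tjb, tbi, tic, tci, tid, tdi,
      tij, tji, tai, tja, tib, tbj, tjc, tcj, tjd, tdj,
      taa, tac, tad, tbb, tcb, tdb, tbc, tbd, tca, tcd, tda, tdc]



def repM : Fin 6 → Matrix (Fin 9) (Fin 9) ℕ
  | 0 => Matrix.diagonal ![1,0,1,0,0,1,1,1,1]
  | 1 => Matrix.diagonal ![0,1,0,1,1,0,0,0,0]
  | 2 => fun r c => if (r,c) = (2,1) ∨ (r,c) = (8,3) then 1 else 0
  | 3 => fun r c => if (r,c) = (3,0) ∨ (r,c) = (4,2) then 1 else 0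
  | 4 => fun r c => if (r,c) = (5,0) ∨ (r,c) = (6,5) ∨ (r,c) = (8,6) then 1 else 0
  | 5 => fun r c => if (r,c) = (7,0) ∨ (r,c) = (8,7) then 1 else 0

noncomputable def cmap : Matrix (Fin 9) (Fin 9) ℕ →+* Matrix (Fin 9) (Fin 9) k :=
  (Nat.castRingHom k).mapMatrix

set_option maxRecDepth 100000 in
lemma rel_preserved : ∀ {x y : FreeAlgebra k (Fin 6)}, QuiverRel k x y →
    (FreeAlgebra.lift k fun n => cmap k (repM n)) x
      = (FreeAlgebra.lift k fun n => cmap k (repM n)) y := by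
  intro x y h
  induction h <;>
    simp only [map_mul, map_add, map_one, map_zero, FreeAlgebra.lift_ι_apply] <;>
    simp only [← map_mul (cmap k), ← map_add (cmap k), ← map_one (cmap k),
      ← map_zero (cmap k)] <;>
    exact congrArg (cmap k) (by decide)

noncomputable def rep : QuiverAlg k →ₐ[k] Matrix (Fin 9) (Fin 9) k :=
  RingQuot.liftAlgHom k ⟨FreeAlgebra.lift k fun n => cmap k (repM n),
    fun _ _ h => rel_preserved k h⟩

lemma rep_mk (x : FreeAlgebra k (Fin 6)) :
    rep k (RingQuot.mkAlgHom k (QuiverRel k) x)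
      = (FreeAlgebra.lift k fun n => cmap k (repM n)) x := by
  rw [rep, RingQuot.liftAlgHom_mkAlgHom_apply]

def Rmat : Fin 9 → Matrix (Fin 9) (Fin 9) ℕ :=
  ![repM 0, repM 1, repM 2, repM 3, repM 3 * repM 2, repM 4, repM 4 * repM 4,
    repM 5, repM 5 * repM 5]

lemma rep_basis (p : Fin 9) : rep k (qbasisVec k p) = cmap k (Rmat p) := by
  fin_cases p
  · show rep k (qi k) = cmap k (repM 0)
    rw [qi, rep_mk, FreeAlgebra.lift_ι_apply]
  · show rep k (qj k) = cmap k (repM 1)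
    rw [qj, rep_mk, FreeAlgebra.lift_ι_apply]
  · show rep k (qα k) = cmap k (repM 2)
    rw [qα, rep_mk, FreeAlgebra.lift_ι_apply]
  · show rep k (qβ k) = cmap k (repM 3)
    rw [qβ, rep_mk, FreeAlgebra.lift_ι_apply]
  · show rep k (qβ k * qα k) = cmap k (repM 3 * repM 2)
    rw [map_mul, map_mul, qβ, qα, rep_mk, rep_mk, FreeAlgebra.lift_ι_apply,
      FreeAlgebra.lift_ι_apply]
  · show rep k (qγ k) = cmap k (repM 4)
    rw [qγ, rep_mk, FreeAlgebra.lift_ι_apply]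
  · show rep k (qγ k ^ 2) = cmap k (repM 4 * repM 4)
    rw [pow_two, map_mul, map_mul, qγ, rep_mk, FreeAlgebra.lift_ι_apply]
  · show rep k (qδ k) = cmap k (repM 5)
    rw [qδ, rep_mk, FreeAlgebra.lift_ι_apply]
  · show rep k (qδ k ^ 2) = cmap k (repM 5 * repM 5)
    rw [pow_two, map_mul, map_mul, qδ, rep_mk, FreeAlgebra.lift_ι_apply]

noncomputable def coordT (q : Fin 9) : QuiverAlg k →ₗ[k] k where
  toFun a := rep k a q 0 + rep k a q 1
  map_add' x y := by simp [Matrix.add_apply]; ring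
  map_smul' c x := by simp [Matrix.smul_apply, smul_eq_mul]; ring

lemma Rmat_col : ∀ p r : Fin 9, Rmat p r 0 + Rmat p r 1 = if r = p then 1 else 0 := by
  decide

lemma cmap_apply (M : Matrix (Fin 9) (Fin 9) ℕ) (r c : Fin 9) :
    cmap k M r c = (M r c : k) := rfl

lemma coordT_basis (q p : Fin 9) : coordT k q (qbasisVec k p) = if q = p then 1 else 0 := by
  show rep k (qbasisVec k p) q 0 + rep k (qbasisVec k p) q 1 = _
  rw [rep_basis, cmap_apply, cmap_apply, ← Nat.cast_add, Rmat_col p q]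
  split <;> simp

lemma qbasis_li : LinearIndependent k (qbasisVec k) := by
  rw [Fintype.linearIndependent_iff]
  intro g hg p
  have h := congrArg (coordT k p) hg
  rw [map_sum, map_zero] at h
  simp only [map_smul, coordT_basis, smul_eq_mul, mul_ite, mul_one, mul_zero,
    Finset.sum_ite_eq, Finset.mem_univ, if_true] at h
  exact h



open Submodule

noncomputable def bspan (s : Finset (Fin 9)) : Submodule k (QuiverAlg k) :=
  Submodule.span k (qbasisVec k '' ↑s)

lemma mul_mem_bspan {s t u : Finset (Fin 9)}
    (h : ∀ p ∈ s, ∀ q ∈ t, ∀ r, tbl p q = some r → r ∈ u) :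
    ∀ x ∈ bspan k s, ∀ y ∈ bspan k t, x * y ∈ bspan k u := by
  intro x hx
  induction hx using Submodule.span_induction with
  | mem x hxs =>
      intro y hy
      induction hy using Submodule.span_induction with
      | mem y hyt =>
          obtain ⟨p, hp, rfl⟩ := hxs
          obtain ⟨q, hq, rfl⟩ := hyt
          rw [basis_mul]
          cases htbl : tbl p q with
          | none => exact zero_mem _
          | some r =>
              exact Submodule.subset_span
                ⟨r, Finset.mem_coe.mpr (h p (Finset.mem_coe.mp hp) q (Finset.mem_coe.mp hq) r htbl), rfl⟩
      | zero => rw [mul_zero]; exact zero_mem _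
      | add y z hy hz ihy ihz => rw [mul_add]; exact add_mem ihy ihz
      | smul c y hy ihy => rw [mul_smul_comm]; exact smul_mem _ c ihy
  | zero => intro y _; rw [zero_mul]; exact zero_mem _
  | add x z hx hz ihx ihz => intro y hy; rw [add_mul]; exact add_mem (ihx y hy) (ihz y hy)
  | smul c x hx ihx => intro y hy; rw [smul_mul_assoc]; exact smul_mem _ c (ihx y hy)

lemma one_eq : (1 : QuiverAlg k) = qbasisVec k 0 + qbasisVec k 1 := by
  rw [qb0, qb1, rsum]

lemma mk_mem_bspan (x : FreeAlgebra k (Fin 6)) :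
    RingQuot.mkAlgHom k (QuiverRel k) x ∈ bspan k Finset.univ := by
  induction x using FreeAlgebra.induction with
  | grade0 r =>
      have h1 : (1 : QuiverAlg k) ∈ bspan k Finset.univ := by
        rw [one_eq]
        exact add_mem (Submodule.subset_span ⟨0, by simp, rfl⟩)
          (Submodule.subset_span ⟨1, by simp, rfl⟩)
      have h2 : algebraMap k (QuiverAlg k) r = r • (1 : QuiverAlg k) := by
        rw [Algebra.smul_def, mul_one]
      rw [AlgHom.commutes, h2]
      exact smul_mem _ r h1
  | grade1 g =>
      fin_cases g
      · exact Submodule.subset_span ⟨0, by simp, rfl⟩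
      · exact Submodule.subset_span ⟨1, by simp, rfl⟩
      · exact Submodule.subset_span ⟨2, by simp, rfl⟩
      · exact Submodule.subset_span ⟨3, by simp, rfl⟩
      · exact Submodule.subset_span ⟨5, by simp, rfl⟩
      · exact Submodule.subset_span ⟨7, by simp, rfl⟩
  | mul a b ha hb =>
      rw [map_mul]
      exact mul_mem_bspan k (fun p _ q _ r _ => Finset.mem_univ r) _ ha _ hb
  | add a b ha hb => rw [map_add]; exact add_mem ha hb

lemma bspan_univ : bspan k Finset.univ = ⊤ := by
  rw [eq_top_iff]
  intro z _
  obtain ⟨x, rfl⟩ := RingQuot.mkAlgHom_surjective k (QuiverRel k) z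
  exact mk_mem_bspan k x

noncomputable def B : Module.Basis (Fin 9) k (QuiverAlg k) :=
  Module.Basis.mk (qbasis_li k) (by
    have := (bspan_univ k).ge
    rwa [bspan, Finset.coe_univ, Set.image_univ] at this)

lemma B_apply (p : Fin 9) : B k p = qbasisVec k p := Module.Basis.mk_apply _ _ p

lemma B_repr_basis (p : Fin 9) : (B k).repr (qbasisVec k p) = Finsupp.single p 1 := by
  rw [← B_apply, Module.Basis.repr_self]

lemma mem_bspan_iff {s : Finset (Fin 9)} {x : QuiverAlg k} :
    x ∈ bspan k s ↔ ∀ p, p ∉ s → (B k).repr x p = 0 := by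
  have himg : (⇑(B k)) '' ↑s = qbasisVec k '' ↑s :=
    Set.image_congr (fun p _ => B_apply k p)
  rw [bspan, ← himg, Module.Basis.mem_span_image]
  constructor
  · intro hsub p hp
    by_contra h0
    exact hp (hsub (Finsupp.mem_support_iff.mpr h0))
  · intro h p hp
    by_contra hps
    exact Finsupp.mem_support_iff.mp hp (h p hps)

lemma mul_repr (q r : Fin 9) (a : QuiverAlg k) :
    (B k).repr (qbasisVec k q * a) r
      = ∑ p : Fin 9, (if tbl q p = some r then (B k).repr a p else 0) := by
  conv_lhs => rw [← Module.Basis.sum_repr (B k) a]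
  rw [Finset.mul_sum, map_sum, Finsupp.finset_sum_apply]
  refine Finset.sum_congr rfl (fun p _ => ?_)
  rw [B_apply, mul_smul_comm, map_smul, Finsupp.smul_apply, basis_mul]
  cases htbl : tbl q p with
  | none => simp
  | some u =>
      show ((B k).repr a) p • ((B k).repr (qbasisVec k u)) r
        = if some u = some r then ((B k).repr a) p else 0
      rw [B_repr_basis]
      by_cases hur : u = r <;> simp [Finsupp.single_apply, hur]

lemma coeff_zero (q r p₀ : Fin 9) {a : QuiverAlg k} (hq : qbasisVec k q * a = 0)
    (E : ∀ p : Fin 9, tbl q p = some r ↔ p = p₀) : (B k).repr a p₀ = 0 := by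
  have h := mul_repr k q r a
  rw [hq, map_zero, Finsupp.coe_zero, Pi.zero_apply] at h
  simp only [E] at h
  rw [Finset.sum_ite_eq' Finset.univ p₀ (fun p => (B k).repr a p)] at h
  simpa using h.symm

noncomputable def idealOf (s : Finset (Fin 9))
    (hcl : ∀ p, ∀ q ∈ s, ∀ r, tbl p q = some r → r ∈ s) : Ideal (QuiverAlg k) where
  carrier := bspan k s
  add_mem' := fun ha hb => (bspan k s).add_mem ha hb
  zero_mem' := (bspan k s).zero_mem
  smul_mem' := fun c x hx => by
    have hc : c ∈ bspan k Finset.univ := by rw [bspan_univ]; trivial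
    exact mul_mem_bspan k (fun p _ q hq r hr => hcl p q hq r hr) c hc x hx

lemma mem_idealOf {s hcl} {x : QuiverAlg k} : x ∈ idealOf k s hcl ↔ x ∈ bspan k s := Iff.rfl


open Submodule

lemma erase_closed (v : Fin 9) (hv : v = 0 ∨ v = 1) :
    ∀ p, ∀ q ∈ Finset.univ.erase v, ∀ r, tbl p q = some r → r ∈ Finset.univ.erase v := by
  rcases hv with rfl | rfl <;> decide

noncomputable def MI (v : Fin 9) (hv : v = 0 ∨ v = 1) : Ideal (QuiverAlg k) :=
  idealOf k (Finset.univ.erase v) (erase_closed v hv)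

lemma MI_max (v : Fin 9) (hv : v = 0 ∨ v = 1) : (MI k v hv).IsMaximal := by
  rw [Ideal.isMaximal_iff]
  constructor
  · intro h1
    have h0 := (mem_bspan_iff k).mp h1 v (Finset.notMem_erase v _)
    rw [one_eq, map_add, Finsupp.add_apply, B_repr_basis, B_repr_basis] at h0
    rcases hv with rfl | rfl <;> simp [Finsupp.single_apply] at h0
  · intro J x hMJ hxM hxJ
    have hc0 : (B k).repr x v ≠ 0 := by
      intro h0
      apply hxM
      show x ∈ bspan k _
      apply (mem_bspan_iff k).mpr
      intro p hp
      have hpv : p = v := by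
        by_contra hne
        exact hp (Finset.mem_erase.mpr ⟨hne, Finset.mem_univ p⟩)
      rwa [hpv]
    set c := (B k).repr x v with hc
    have hyM : x - c • qbasisVec k v ∈ MI k v hv := by
      show _ ∈ bspan k _
      apply (mem_bspan_iff k).mpr
      intro p hp
      have hpv : p = v := by
        by_contra hne
        exact hp (Finset.mem_erase.mpr ⟨hne, Finset.mem_univ p⟩)
      subst hpv
      rw [map_sub, map_smul, Finsupp.sub_apply, Finsupp.smul_apply, B_repr_basis,
        Finsupp.single_eq_same, smul_eq_mul, mul_one, sub_self]
    have hbvJ : c • qbasisVec k v ∈ J := by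
      have hsub := J.sub_mem hxJ (hMJ hyM)
      simpa using hsub
    have hbv : qbasisVec k v ∈ J := by
      have h2 : algebraMap k _ c⁻¹ * (c • qbasisVec k v) ∈ J := J.mul_mem_left _ hbvJ
      rwa [Algebra.smul_def, ← mul_assoc, ← map_mul, inv_mul_cancel₀ hc0, map_one,
        one_mul] at h2
    have hother : ∀ w : Fin 9, w ≠ v → qbasisVec k w ∈ J := by
      intro w hw
      apply hMJ
      show _ ∈ bspan k _
      exact Submodule.subset_span ⟨w, Finset.mem_coe.mpr
        (Finset.mem_erase.mpr ⟨hw, Finset.mem_univ w⟩), rfl⟩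
    rcases hv with rfl | rfl
    · rw [one_eq]; exact J.add_mem hbv (hother 1 (by decide))
    · rw [one_eq]; exact J.add_mem (hother 0 (by decide)) hbv

lemma NI_closed : ∀ p, ∀ q ∈ ({2,3,4,5,6,7,8} : Finset (Fin 9)), ∀ r,
    tbl p q = some r → r ∈ ({2,3,4,5,6,7,8} : Finset (Fin 9)) := by decide

noncomputable def NI : Ideal (QuiverAlg k) := idealOf k {2,3,4,5,6,7,8} (NI_closed)

lemma jac_le_NI : (⊥ : Ideal (QuiverAlg k)).jacobson ≤ NI k := by
  intro x hx
  have h1 : x ∈ MI k 0 (Or.inl rfl) :=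
    Ideal.mem_sInf.mp hx ⟨bot_le, MI_max k 0 (Or.inl rfl)⟩
  have h2 : x ∈ MI k 1 (Or.inr rfl) :=
    Ideal.mem_sInf.mp hx ⟨bot_le, MI_max k 1 (Or.inr rfl)⟩
  show x ∈ bspan k _
  apply (mem_bspan_iff k).mpr
  intro p hp
  fin_cases p
  · exact (mem_bspan_iff k).mp h1 0 (by decide)
  · exact (mem_bspan_iff k).mp h2 1 (by decide)
  · exact absurd (by decide) hp
  · exact absurd (by decide) hp
  · exact absurd (by decide) hp
  · exact absurd (by decide) hp
  · exact absurd (by decide) hp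
  · exact absurd (by decide) hp
  · exact absurd (by decide) hp

lemma NI_le_jac : NI k ≤ (⊥ : Ideal (QuiverAlg k)).jacobson := by
  intro n hn
  apply Ideal.mem_sInf.mpr
  rintro M ⟨-, hM⟩
  by_contra hnM
  have hlt : M < M ⊔ NI k :=
    SetLike.lt_iff_le_and_exists.mpr ⟨le_sup_left, n, Submodule.mem_sup_right hn, hnM⟩
  have htop : M ⊔ NI k = ⊤ := hM.1.2 _ hlt
  have h1 : (1 : QuiverAlg k) ∈ M ⊔ NI k := by rw [htop]; trivial
  obtain ⟨m, hm, n', hn', hmn⟩ := Submodule.mem_sup.mp h1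
  have hn'b : n' ∈ bspan k {2,3,4,5,6,7,8} := hn'
  have hsq : n' * n' ∈ bspan k {4,6,8} :=
    mul_mem_bspan k (by decide) n' hn'b n' hn'b
  have h4 : (n' * n') * (n' * n') = 0 := by
    have h0 : (n' * n') * (n' * n') ∈ bspan k (∅ : Finset (Fin 9)) :=
      mul_mem_bspan k (by decide) _ hsq _ hsq
    simpa [bspan] using h0
  have hnil : IsNilpotent n' := ⟨4, by
    rw [show (4:ℕ) = 2 + 2 from rfl, pow_add, pow_two, h4]⟩
  have hu : IsUnit m := by
    have hm1 : m = 1 - n' := by rw [← hmn, add_sub_cancel_right]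
    rw [hm1]
    exact hnil.isUnit_one_sub
  exact hM.ne_top (M.eq_top_of_isUnit_mem hm hu)

lemma span_mul_basis_zero {s : Finset (Fin 9)} {b : Fin 9}
    (h : ∀ p ∈ s, tbl p b = none) : ∀ x ∈ bspan k s, x * qbasisVec k b = 0 := by
  intro x hx
  induction hx using Submodule.span_induction with
  | mem x hxs =>
      obtain ⟨p, hp, rfl⟩ := hxs
      rw [basis_mul, h p (Finset.mem_coe.mp hp)]
      rfl
  | zero => exact zero_mul _
  | add x y _ _ ihx ihy => rw [add_mul, ihx, ihy, add_zero]
  | smul c x _ ih => rw [smul_mul_assoc, ih, smul_zero]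

lemma ab_eq : qα k * qβ k = qbasisVec k 8 := by rw [qb8, pow_two, rdd]

lemma soc_memAB : qα k * qβ k ∈ qsoc k := by
  show ∀ x ∈ (⊥ : Ideal (QuiverAlg k)).jacobson, x * (qα k * qβ k) = 0
  intro x hx
  rw [ab_eq]
  exact span_mul_basis_zero k (by decide) x (jac_le_NI k hx)

lemma soc_memBA : qβ k * qα k ∈ qsoc k := by
  show ∀ x ∈ (⊥ : Ideal (QuiverAlg k)).jacobson, x * (qβ k * qα k) = 0
  intro x hx
  rw [← qb4]
  exact span_mul_basis_zero k (by decide) x (jac_le_NI k hx)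

lemma soc_le : ∀ a ∈ qsoc k, a ∈ bspan k {4, 8} := by
  intro a ha
  have hgen : ∀ q ∈ ({2,3,4,5,6,7,8} : Finset (Fin 9)), qbasisVec k q * a = 0 := by
    intro q hq
    exact ha _ (NI_le_jac k (Submodule.subset_span ⟨q, Finset.mem_coe.mpr hq, rfl⟩))
  have h2 := hgen 2 (by decide)
  have h3 := hgen 3 (by decide)
  have h5 := hgen 5 (by decide)
  have h6 := hgen 6 (by decide)
  have h7 := hgen 7 (by decide)
  have c0 : (B k).repr a 0 = 0 := coeff_zero k 6 6 0 h6 (by decide)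
  have c5 : (B k).repr a 5 = 0 := coeff_zero k 6 8 5 h6 (by decide)
  have c6 : (B k).repr a 6 = 0 := coeff_zero k 5 8 6 h5 (by decide)
  have c7 : (B k).repr a 7 = 0 := coeff_zero k 7 8 7 h7 (by decide)
  have c1 : (B k).repr a 1 = 0 := coeff_zero k 2 2 1 h2 (by decide)
  have c3 : (B k).repr a 3 = 0 := coeff_zero k 2 8 3 h2 (by decide)
  have c2 : (B k).repr a 2 = 0 := coeff_zero k 3 4 2 h3 (by decide)
  apply (mem_bspan_iff k).mpr
  intro p hp
  fin_cases p
  · exact c0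
  · exact c1
  · exact c2
  · exact c3
  · exact absurd (by decide) hp
  · exact c5
  · exact c6
  · exact c7
  · exact absurd (by decide) hp



end QSoc

open QSoc in
/-- The socle of the quiver algebra `A` has `k`-basis `{αβ, βα}`. -/
theorem stmt_7 :
    ∃ b : Module.Basis (Fin 2) k ↥(qsoc k),
      (b 0 : QuiverAlg k) = qα k * qβ k ∧ (b 1 : QuiverAlg k) = qβ k * qα k := by
  classical
  have habs : qα k * qβ k ∈ qsoc k := soc_memAB k
  have hbas : qβ k * qα k ∈ qsoc k := soc_memBA k
  set v : Fin 2 → qsoc k := ![⟨qα k * qβ k, habs⟩, ⟨qβ k * qα k, hbas⟩] with hv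
  have himg : ∀ t : Fin 2, ((qsoc k).subtype ∘ v) t = qbasisVec k (![8, 4] t) := by
    intro t; fin_cases t
    · show qα k * qβ k = qbasisVec k 8; exact ab_eq k
    · show qβ k * qα k = qbasisVec k 4; rw [qb4]
  have hli : LinearIndependent k v := by
    apply LinearIndependent.of_comp (qsoc k).subtype
    rw [funext himg]
    exact (qbasis_li k).comp ![8, 4] (by decide)
  have hsp : ⊤ ≤ Submodule.span k (Set.range v) := by
    rintro ⟨a, ha⟩ -
    have hmem : a ∈ bspan k {4, 8} := soc_le k a ha
    have himg2 : (qbasisVec k '' ↑({4, 8} : Finset (Fin 9)))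
        = {qbasisVec k 4, qbasisVec k 8} := by
      simp [Finset.coe_insert, Set.image_insert_eq]
    rw [bspan, himg2] at hmem
    obtain ⟨c, d, hcd⟩ := Submodule.mem_span_pair.mp hmem
    rw [qb4, ← ab_eq] at hcd
    have heq : (⟨a, ha⟩ : qsoc k) = c • v 1 + d • v 0 := by
      apply Subtype.ext
      simp only [hv, Submodule.coe_add, SetLike.val_smul, Matrix.cons_val_one,
        Matrix.head_cons, Matrix.cons_val_zero]
      exact hcd.symm
    rw [heq]
    exact Submodule.add_mem _
      (Submodule.smul_mem _ _ (Submodule.subset_span (Set.mem_range_self 1)))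
      (Submodule.smul_mem _ _ (Submodule.subset_span (Set.mem_range_self 0)))
  refine ⟨Module.Basis.mk hli hsp, ?_, ?_⟩
  · rw [Module.Basis.mk_apply, hv]; rfl
  · rw [Module.Basis.mk_apply, hv]; rfl
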